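/- arXiv:1701.05173 — 2 statements merged into one kernel-verified Lean document; each statement's English description precedes it below -/
import Mathlib

section
/- Let 𝔷(2l) = 8^l (3l−4)!/((l−2)!(2l)!) for integers l ≥ 2. Let (l_j) be a sequence of integers tending to infinity and (w_j) a sequence of even integers with w_j ≥ −2l_j + 4 such that w_j + 2l_j → ∞ as j → ∞. Then the ratio 54^{−w_j/2} · 𝔷(w_j + 2l_j) / 𝔷(2l_j), divided by (w_j/(2l_j) + 1)^{−5/2}, converges to 1 as j → ∞. -/
open Filter

/-- The free Boltzmann partition function `𝔷(2l) = 8^l (3l−4)!/((l−2)!(2l)!)`,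
as a function of `l`; i.e. `fbZ l = 𝔷(2l)`. -/
noncomputable def fbZ (l : ℕ) : ℝ :=
  8 ^ l * (Nat.factorial (3 * l - 4)) / (Nat.factorial (l - 2) * Nat.factorial (2 * l))

namespace FbZAux

open Real

noncomputable def gAux (l : ℕ) : ℝ := fbZ l * (l : ℝ) ^ ((5:ℝ)/2) / 54 ^ l

noncomputable def Gfun (l : ℕ) : ℝ :=
  2 - 4 * Real.log 3 + (3*(l:ℝ) - 4) * Real.log (1 - 4/(3*(l:ℝ)))
    - ((l:ℝ) - 2) * Real.log (1 - 2/(l:ℝ))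
    + (1/2) * Real.log ((3*(l:ℝ) - 4)/(4*((l:ℝ) - 2)))

lemma fbZ_pos (l : ℕ) : 0 < fbZ l := by
  unfold fbZ
  have h1 := (3*l-4).factorial_pos
  have h2 := (l-2).factorial_pos
  have h3 := (2*l).factorial_pos
  positivity

lemma gAux_pos (l : ℕ) (hl : 1 ≤ l) : 0 < gAux l := by
  have h0 : (0:ℝ) < (l:ℝ) := by exact_mod_cast hl
  unfold gAux
  exact div_pos (mul_pos (fbZ_pos l) (Real.rpow_pos_of_pos h0 _)) (by positivity)

lemma log_gAux_eq (l : ℕ) (hl : 3 ≤ l) :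
    Real.log (gAux l) = Real.log (Stirling.stirlingSeq (3*l-4))
      - Real.log (Stirling.stirlingSeq (l-2)) - Real.log (Stirling.stirlingSeq (2*l))
      + Gfun l := by
  have hx : (3:ℝ) ≤ (l:ℝ) := by exact_mod_cast hl
  set x : ℝ := (l:ℝ) with hxdef
  have hx0 : 0 < x := by linarith
  have h34 : ((3*l-4 : ℕ) : ℝ) = 3*x - 4 := by
    have : 4 ≤ 3*l := by omega
    push_cast [this]; ring
  have h2 : ((l-2 : ℕ) : ℝ) = x - 2 := by
    have : 2 ≤ l := by omega
    push_cast [this]; ring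
  have h2l : ((2*l : ℕ) : ℝ) = 2*x := by push_cast; ring
  have p34 : (0:ℝ) < 3*x - 4 := by linarith
  have p2 : (0:ℝ) < x - 2 := by linarith
  have pA : (0:ℝ) < 1 - 4/(3*x) := by
    rw [sub_pos, div_lt_one (by linarith)]; linarith
  have pB : (0:ℝ) < 1 - 2/x := by
    rw [sub_pos, div_lt_one hx0]; linarith
  have f34 : (0:ℝ) < ((3*l-4).factorial : ℝ) := by exact_mod_cast (3*l-4).factorial_pos
  have f2 : (0:ℝ) < ((l-2).factorial : ℝ) := by exact_mod_cast (l-2).factorial_pos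
  have f2l : (0:ℝ) < ((2*l).factorial : ℝ) := by exact_mod_cast (2*l).factorial_pos
  have stir : ∀ n : ℕ, 0 < n → Real.log (Stirling.stirlingSeq n)
      = Real.log (n.factorial) - 1/2 * Real.log (2*(n:ℝ)) - n * (Real.log n - 1) := by
    intro n hn
    rw [Stirling.log_stirlingSeq_formula]
    have hn0 : (0:ℝ) < (n:ℝ) := by exact_mod_cast hn
    rw [Real.log_div (ne_of_gt hn0) (Real.exp_ne_zero 1), Real.log_exp]
  rw [stir _ (by omega), stir _ (by omega), stir _ (by omega), h34, h2, h2l]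
  have hgAux : Real.log (gAux l) = (l:ℝ) * Real.log 8 + Real.log ((3*l-4).factorial)
      - Real.log ((l-2).factorial) - Real.log ((2*l).factorial)
      + (5/2) * Real.log x - (l:ℝ) * Real.log 54 := by
    unfold gAux fbZ
    rw [Real.log_div (by positivity) (by positivity), Real.log_mul (by positivity) (by positivity),
      Real.log_div (by positivity) (by positivity), Real.log_mul (by positivity) (by positivity),
      Real.log_mul (by positivity) (by positivity),
      Real.log_pow, Real.log_pow, Real.log_rpow hx0]
    ring
  rw [hgAux]
  have hA : Real.log (3*x - 4) = Real.log 3 + Real.log x + Real.log (1 - 4/(3*x)) := by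
    rw [show 3*x - 4 = 3*x*(1 - 4/(3*x)) by field_simp,
      Real.log_mul (by positivity) (ne_of_gt pA), Real.log_mul (by norm_num) (ne_of_gt hx0)]
  have hB : Real.log (x - 2) = Real.log x + Real.log (1 - 2/x) := by
    rw [show x - 2 = x*(1 - 2/x) by field_simp,
      Real.log_mul (ne_of_gt hx0) (ne_of_gt pB)]
  have h8 : Real.log 8 = 3 * Real.log 2 := by
    rw [show (8:ℝ) = 2^3 by norm_num, Real.log_pow]; push_cast; ring
  have h54 : Real.log 54 = Real.log 2 + 3 * Real.log 3 := by
    rw [show (54:ℝ) = 2 * 3^3 by norm_num, Real.log_mul (by norm_num) (by norm_num),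
      Real.log_pow]; push_cast; ring
  have hq : Real.log ((3*x - 4)/(4*(x - 2))) =
      Real.log (3*x-4) - (2 * Real.log 2 + Real.log (x-2)) := by
    rw [Real.log_div (ne_of_gt p34) (by positivity),
      Real.log_mul (by norm_num) (ne_of_gt p2),
      show (4:ℝ) = 2^2 by norm_num, Real.log_pow]
    push_cast; ring
  have hl234 : Real.log (2*(3*x-4)) = Real.log 2 + Real.log (3*x-4) :=
    Real.log_mul (by norm_num) (ne_of_gt p34)
  have hl22 : Real.log (2*(x-2)) = Real.log 2 + Real.log (x-2) :=
    Real.log_mul (by norm_num) (ne_of_gt p2)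
  have hl22l : Real.log (2*(2*x)) = 2 * Real.log 2 + Real.log x := by
    rw [show 2*(2*x) = 2^2 * x by ring, Real.log_mul (by positivity) (ne_of_gt hx0),
      Real.log_pow]
    push_cast; ring
  have hl2x : Real.log (2*x) = Real.log 2 + Real.log x :=
    Real.log_mul (by norm_num) (ne_of_gt hx0)
  unfold Gfun
  rw [hl234, hl22, hl22l, hl2x, hq, hA, hB, h8, h54]
  rw [← hxdef]
  ring

lemma helper_lim (t c : ℝ) :
    Tendsto (fun x : ℝ => (x + c) * Real.log (1 + t / x)) atTop (nhds t) := by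
  have h1 := Real.tendsto_mul_log_one_add_div_atTop t
  have h2 : Tendsto (fun x : ℝ => Real.log (1 + t / x)) atTop (nhds 0) := by
    have : Tendsto (fun x : ℝ => 1 + t / x) atTop (nhds 1) := by
      simpa using tendsto_const_nhds.add ((tendsto_const_nhds (α := ℝ)).div_atTop tendsto_id)
    simpa using (this.log (by norm_num))
  have := h1.add (h2.const_mul c)
  simp only [mul_zero, add_zero] at this
  refine this.congr fun x => by ring

lemma Gfun_tendsto :
    Tendsto Gfun atTop (nhds (2 - 4 * Real.log 3 + (-4) - (-2) + (1/2) * Real.log (3/4))) := by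
  have hcast : Tendsto (fun l : ℕ => (l:ℝ)) atTop atTop := tendsto_natCast_atTop_atTop
  have h3cast : Tendsto (fun l : ℕ => 3*(l:ℝ)) atTop atTop :=
    hcast.const_mul_atTop (by norm_num)
  have T1 : Tendsto (fun l : ℕ => (3*(l:ℝ) - 4) * Real.log (1 - 4/(3*(l:ℝ)))) atTop
      (nhds (-4)) := by
    have := (helper_lim (-4) (-4)).comp h3cast
    refine this.congr fun l => ?_
    simp [Function.comp, sub_eq_add_neg, neg_div]
  have T2 : Tendsto (fun l : ℕ => ((l:ℝ) - 2) * Real.log (1 - 2/(l:ℝ))) atTop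
      (nhds (-2)) := by
    have := (helper_lim (-2) (-2)).comp hcast
    refine this.congr fun l => ?_
    simp [Function.comp, sub_eq_add_neg, neg_div]
  have T3 : Tendsto (fun l : ℕ => (3*(l:ℝ) - 4)/(4*((l:ℝ) - 2))) atTop (nhds (3/4)) := by
    have hq : Tendsto (fun l : ℕ => (3 - 4/(l:ℝ))/(4 - 8/(l:ℝ))) atTop (nhds (3/4)) := by
      have hnum : Tendsto (fun l : ℕ => 3 - 4/(l:ℝ)) atTop (nhds 3) := by
        simpa using (tendsto_const_nhds (x := (3:ℝ)) (f := atTop)).sub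
          ((tendsto_const_nhds : Tendsto (fun _ : ℕ => (4:ℝ)) atTop _).div_atTop hcast)
      have hden : Tendsto (fun l : ℕ => 4 - 8/(l:ℝ)) atTop (nhds 4) := by
        simpa using (tendsto_const_nhds (x := (4:ℝ)) (f := atTop)).sub
          ((tendsto_const_nhds : Tendsto (fun _ : ℕ => (8:ℝ)) atTop _).div_atTop hcast)
      exact hnum.div hden (by norm_num)
    refine hq.congr' ?_
    filter_upwards [eventually_ge_atTop 3] with l hl
    have hl0 : (0:ℝ) < (l:ℝ) := by exact_mod_cast (by omega : 0 < l)
    have hl2 : (l:ℝ) - 2 ≠ 0 := by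
      have : (3:ℝ) ≤ (l:ℝ) := by exact_mod_cast hl
      linarith
    have e1 : 3 - 4/(l:ℝ) = (3*(l:ℝ)-4)/(l:ℝ) := by
      rw [eq_div_iff hl0.ne', sub_mul, div_mul_cancel₀ _ hl0.ne']
    have e2 : 4 - 8/(l:ℝ) = (4*((l:ℝ)-2))/(l:ℝ) := by
      rw [eq_div_iff hl0.ne', sub_mul, div_mul_cancel₀ _ hl0.ne']; ring
    rw [e1, e2, div_div_div_cancel_right₀ hl0.ne']
  have T3' : Tendsto (fun l : ℕ => Real.log ((3*(l:ℝ) - 4)/(4*((l:ℝ) - 2)))) atTop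
      (nhds (Real.log (3/4))) := T3.log (by norm_num)
  unfold Gfun
  exact ((((tendsto_const_nhds.add T1).sub T2)).add (T3'.const_mul (1/2))).congr
    fun l => by ring

lemma gAux_tendsto : ∃ c : ℝ, 0 < c ∧ Tendsto gAux atTop (nhds c) := by
  have hπ : Real.sqrt π ≠ 0 := by positivity
  have hs : Tendsto (fun n => Real.log (Stirling.stirlingSeq n)) atTop
      (nhds (Real.log (Real.sqrt π))) := Stirling.tendsto_stirlingSeq_sqrt_pi.log hπ
  have c1 : Tendsto (fun l : ℕ => 3*l - 4) atTop atTop :=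
    tendsto_atTop_mono' atTop
      (by filter_upwards [eventually_ge_atTop 2] with l hl; simp only [id_eq]; omega) tendsto_id
  have c2 : Tendsto (fun l : ℕ => l - 2) atTop atTop := tendsto_sub_atTop_nat 2
  have c3 : Tendsto (fun l : ℕ => 2*l) atTop atTop :=
    tendsto_atTop_mono (fun l => by simp only [id_eq]; omega) tendsto_id
  set L : ℝ := Real.log (Real.sqrt π) - Real.log (Real.sqrt π) - Real.log (Real.sqrt π)
    + (2 - 4 * Real.log 3 + (-4) - (-2) + (1/2) * Real.log (3/4))
  have hloglim : Tendsto (fun l : ℕ => Real.log (gAux l)) atTop (nhds L) := by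
    have := (((hs.comp c1).sub (hs.comp c2)).sub (hs.comp c3)).add Gfun_tendsto
    refine this.congr' ?_
    filter_upwards [eventually_ge_atTop 3] with l hl
    exact (log_gAux_eq l hl).symm
  refine ⟨Real.exp L, Real.exp_pos L, ?_⟩
  have := (Real.continuous_exp.continuousAt.tendsto).comp hloglim
  refine this.congr' ?_
  filter_upwards [eventually_ge_atTop 3] with l hl
  show Real.exp (Real.log (gAux l)) = gAux l
  exact Real.exp_log (gAux_pos l (by omega))

end FbZAux

/-- If `l_j → ∞` and `w_j` are even with `w_j ≥ -2l_j + 4` and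
`w_j + 2l_j → ∞`, then `54^{-w_j/2} 𝔷(w_j + 2l_j)/𝔷(2l_j)` is asymptotic to
`(w_j/(2l_j) + 1)^{-5/2}`. -/
theorem fbZ_ratio_asymptotics (l : ℕ → ℕ) (w : ℕ → ℤ)
    (hl : Tendsto l atTop atTop)
    (hw_even : ∀ j, Even (w j))
    (hw_lb : ∀ j, -2 * (l j : ℤ) + 4 ≤ w j)
    (hsum : Tendsto (fun j => w j + 2 * (l j : ℤ)) atTop atTop) :
    Tendsto (fun j =>
      ((54 : ℝ) ^ (-(w j : ℝ) / 2) * fbZ ((w j + 2 * (l j : ℤ)) / 2).toNat / fbZ (l j)) /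
        ((w j : ℝ) / (2 * (l j : ℝ)) + 1) ^ (-(5 : ℝ) / 2))
      atTop (nhds 1) := by
  obtain ⟨c, hc, hg⟩ := FbZAux.gAux_tendsto
  set m : ℕ → ℕ := fun j => ((w j + 2 * (l j : ℤ)) / 2).toNat with hmdef
  have hm2 : ∀ j, (m j : ℤ) * 2 = w j + 2 * (l j : ℤ) := by
    intro j
    obtain ⟨k, hk⟩ := hw_even j
    have hlb := hw_lb j
    simp only [hmdef]
    omega
  have hmT : Tendsto m atTop atTop := by
    rw [tendsto_atTop_atTop]
    intro b
    obtain ⟨N, hN⟩ := (tendsto_atTop_atTop.1 hsum) (2 * (b:ℤ))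
    exact ⟨N, fun j hj => by have := hN j hj; have := hm2 j; omega⟩
  have hgm : Tendsto (fun j => FbZAux.gAux (m j)) atTop (nhds c) := hg.comp hmT
  have hgl : Tendsto (fun j => FbZAux.gAux (l j)) atTop (nhds c) := hg.comp hl
  have hdiv := hgm.div hgl hc.ne'
  rw [div_self hc.ne'] at hdiv
  refine hdiv.congr' ?_
  filter_upwards [hl.eventually_ge_atTop 3, hmT.eventually_ge_atTop 3] with j hl3 hm3
  have hX : (0:ℝ) < (l j : ℝ) := by exact_mod_cast (by omega : 0 < l j)
  have hM : (0:ℝ) < (m j : ℝ) := by exact_mod_cast (by omega : 0 < m j)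
  have hw : (w j : ℝ) = 2 * (m j : ℝ) - 2 * (l j : ℝ) := by
    have h0 := hm2 j
    have h' : ((m j : ℤ) : ℝ) * 2 = ((w j + 2 * (l j : ℤ) : ℤ) : ℝ) := by exact_mod_cast h0
    push_cast at h'
    linarith
  have hbase : (w j : ℝ) / (2 * (l j : ℝ)) + 1 = (m j : ℝ) / (l j : ℝ) := by
    rw [hw]; field_simp; ring
  have hpow : ((m j : ℝ) / (l j : ℝ)) ^ (-(5:ℝ)/2)
      = ((l j : ℝ) ^ ((5:ℝ)/2)) / ((m j : ℝ) ^ ((5:ℝ)/2)) := by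
    rw [show (-(5:ℝ)/2) = -((5:ℝ)/2) by ring, Real.rpow_neg (by positivity),
      Real.div_rpow hM.le hX.le, inv_div]
  have h54 : (54:ℝ) ^ (-(w j : ℝ)/2) = (54:ℝ) ^ (l j) / (54:ℝ) ^ (m j) := by
    rw [show (-(w j : ℝ)/2) = ((l j : ℕ) : ℝ) - ((m j : ℕ) : ℝ) by rw [hw]; ring,
      Real.rpow_sub (by norm_num), Real.rpow_natCast, Real.rpow_natCast]
  rw [hbase, hpow, h54]
  unfold FbZAux.gAux
  have hmj : fbZ ((w j + 2 * (l j : ℤ)) / 2).toNat = fbZ (m j) := rfl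
  rw [Pi.div_apply, hmj]
  have hfl := FbZAux.fbZ_pos (l j)
  have hfm := FbZAux.fbZ_pos (m j)
  have hrl : (0:ℝ) < (l j : ℝ) ^ ((5:ℝ)/2) := Real.rpow_pos_of_pos hX _
  have hrm : (0:ℝ) < (m j : ℝ) ^ ((5:ℝ)/2) := Real.rpow_pos_of_pos hM _
  field_simp
end

section
/- There is a universal constant C > 0 such that for all integers m_L, m_R ≥ 1, Σ_{k_L = ⌈m_L/2⌉}^{m_L} Σ_{k_R = ⌈m_R/2⌉}^{m_R} (k_L + k_R)^{3/2} k_L^{−5/2} k_R^{−5/2} (m_L + m_R − k_L − k_R + 1)^{−5/2} ≤ C (m_L + m_R)^{3/2} m_L^{−5/2} m_R^{−5/2}. -/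
set_option maxHeartbeats 1000000

private noncomputable def ovS : ℝ := ∑' n : ℕ, (n:ℝ) ^ (-(5:ℝ)/4)

private lemma ovS_summable : Summable (fun n : ℕ => (n:ℝ) ^ (-(5:ℝ)/4)) := by
  rw [Real.summable_nat_rpow]; norm_num

private lemma ovS_nonneg : 0 ≤ ovS :=
  tsum_nonneg fun n => Real.rpow_nonneg (Nat.cast_nonneg n) _

/-- partial sum bound -/
private lemma ov_sum_le (m : ℕ) :
    ∑ k ∈ Finset.Icc ((m + 1) / 2) m, (((m - k : ℕ):ℝ) + 1) ^ (-(5:ℝ)/4) ≤ ovS := by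
  have h1 : ∑ k ∈ Finset.Icc ((m + 1) / 2) m, (((m - k : ℕ):ℝ) + 1) ^ (-(5:ℝ)/4)
      = ∑ n ∈ (Finset.Icc ((m + 1) / 2) m).image (fun k => m - k + 1),
          (n:ℝ) ^ (-(5:ℝ)/4) := by
    rw [Finset.sum_image]
    · apply Finset.sum_congr rfl
      intro k _
      push_cast
      ring_nf
    · intro x hx y hy hxy
      simp only [Finset.mem_coe, Finset.mem_Icc] at hx hy hxy
      omega
  rw [h1]
  exact Summable.sum_le_tsum _ (fun n _ => Real.rpow_nonneg (Nat.cast_nonneg n) _) ovS_summable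

/-- A universal bound for the double sum over overshoots:
`Σ_{k_L=⌈m_L/2⌉}^{m_L} Σ_{k_R=⌈m_R/2⌉}^{m_R} (k_L+k_R)^{3/2} k_L^{-5/2} k_R^{-5/2}
(m_L+m_R−k_L−k_R+1)^{-5/2} ≤ C (m_L+m_R)^{3/2} m_L^{-5/2} m_R^{-5/2}`. -/
theorem overshoot_double_sum_bound :
    ∃ C : ℝ, 0 < C ∧ ∀ mL mR : ℕ, 1 ≤ mL → 1 ≤ mR →
      ∑ kL ∈ Finset.Icc ((mL + 1) / 2) mL, ∑ kR ∈ Finset.Icc ((mR + 1) / 2) mR,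
        ((kL : ℝ) + (kR : ℝ)) ^ ((3 : ℝ) / 2) * (kL : ℝ) ^ (-(5 : ℝ) / 2) *
          (kR : ℝ) ^ (-(5 : ℝ) / 2) *
          ((mL : ℝ) + (mR : ℝ) - (kL : ℝ) - (kR : ℝ) + 1) ^ (-(5 : ℝ) / 2)
      ≤ C * ((mL : ℝ) + (mR : ℝ)) ^ ((3 : ℝ) / 2) * (mL : ℝ) ^ (-(5 : ℝ) / 2) *
          (mR : ℝ) ^ (-(5 : ℝ) / 2) := by
  refine ⟨32 * (ovS + 1)^2, by nlinarith [ovS_nonneg], ?_⟩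
  intro mL mR hmL hmR
  set B : ℝ := ((mL : ℝ) + (mR : ℝ)) ^ ((3 : ℝ) / 2) * (mL : ℝ) ^ (-(5 : ℝ) / 2) *
      (mR : ℝ) ^ (-(5 : ℝ) / 2) with hB
  have hBnn : 0 ≤ B := by positivity
  set K : ℝ := (2:ℝ) ^ ((5:ℝ)/2) * (2:ℝ) ^ ((5:ℝ)/2) * B with hK
  have hKnn : 0 ≤ K := by positivity
  -- pointwise bound
  have key : ∀ kL ∈ Finset.Icc ((mL + 1) / 2) mL, ∀ kR ∈ Finset.Icc ((mR + 1) / 2) mR,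
      ((kL : ℝ) + (kR : ℝ)) ^ ((3 : ℝ) / 2) * (kL : ℝ) ^ (-(5 : ℝ) / 2) *
        (kR : ℝ) ^ (-(5 : ℝ) / 2) *
        ((mL : ℝ) + (mR : ℝ) - (kL : ℝ) - (kR : ℝ) + 1) ^ (-(5 : ℝ) / 2)
      ≤ K * ((((mL - kL : ℕ):ℝ) + 1) ^ (-(5:ℝ)/4) * (((mR - kR : ℕ):ℝ) + 1) ^ (-(5:ℝ)/4)) := by
    intro kL hkL kR hkR
    simp only [Finset.mem_Icc] at hkL hkR
    have hkL1 : 1 ≤ kL := by omega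
    have hkR1 : 1 ≤ kR := by omega
    have h2kL : mL ≤ 2 * kL := by omega
    have h2kR : mR ≤ 2 * kR := by omega
    have hkLr : (mL:ℝ) ≤ 2 * kL := by exact_mod_cast h2kL
    have hkRr : (mR:ℝ) ≤ 2 * kR := by exact_mod_cast h2kR
    have hmLr : (1:ℝ) ≤ mL := by exact_mod_cast hmL
    have hmRr : (1:ℝ) ≤ mR := by exact_mod_cast hmR
    -- factor 1
    have b1 : ((kL : ℝ) + (kR : ℝ)) ^ ((3 : ℝ) / 2) ≤ ((mL : ℝ) + (mR : ℝ)) ^ ((3 : ℝ) / 2) := by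
      apply Real.rpow_le_rpow (by positivity) _ (by norm_num)
      have : (kL:ℝ) ≤ mL := by exact_mod_cast hkL.2
      have : (kR:ℝ) ≤ mR := by exact_mod_cast hkR.2
      linarith
    -- factor 2 generic
    have half : ∀ (m k : ℕ), (1:ℝ) ≤ m → (m:ℝ) ≤ 2 * k →
        (k : ℝ) ^ (-(5 : ℝ) / 2) ≤ (2:ℝ) ^ ((5:ℝ)/2) * (m : ℝ) ^ (-(5 : ℝ) / 2) := by
      intro m k hm hk
      have h1 : ((m:ℝ)/2) ^ (-(5 : ℝ) / 2) ≥ (k:ℝ) ^ (-(5 : ℝ) / 2) :=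
        Real.rpow_le_rpow_of_nonpos (by linarith) (by linarith) (by norm_num)
      have h2 : ((m:ℝ)/2) ^ (-(5 : ℝ) / 2) = (2:ℝ) ^ ((5:ℝ)/2) * (m : ℝ) ^ (-(5 : ℝ) / 2) := by
        rw [Real.div_rpow (by linarith) (by norm_num)]
        rw [show (-(5:ℝ)/2) = -(5/2) by norm_num, Real.rpow_neg (by norm_num : (0:ℝ) ≤ 2)]
        field_simp
      linarith [h1, h2.symm.le]
    have b2 := half mL kL hmLr hkLr
    have b3 := half mR kR hmRr hkRr
    -- factor 4
    have hcast : (mL : ℝ) + (mR : ℝ) - (kL : ℝ) - (kR : ℝ) + 1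
        = (((mL - kL : ℕ):ℝ) + 1) + ((((mR - kR : ℕ):ℝ) + 1)) - 1 := by
      rw [Nat.cast_sub hkL.2, Nat.cast_sub hkR.2]; ring
    set x : ℝ := ((mL - kL : ℕ):ℝ) + 1 with hx
    set y : ℝ := ((mR - kR : ℕ):ℝ) + 1 with hy
    have hx1 : (1:ℝ) ≤ x := by
      have := (Nat.cast_nonneg (mL - kL) : (0:ℝ) ≤ _); linarith [hx]
    have hy1 : (1:ℝ) ≤ y := by
      have := (Nat.cast_nonneg (mR - kR) : (0:ℝ) ≤ _); linarith [hy]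
    have hxy : x * y ≤ (x + y - 1)^2 := by nlinarith
    have b4 : ((mL : ℝ) + (mR : ℝ) - (kL : ℝ) - (kR : ℝ) + 1) ^ (-(5 : ℝ) / 2)
        ≤ x ^ (-(5:ℝ)/4) * y ^ (-(5:ℝ)/4) := by
      rw [hcast]
      have ht : (0:ℝ) < x + y - 1 := by linarith
      have e1 : (x + y - 1) ^ (-(5:ℝ)/2) = ((x + y - 1)^(2:ℕ)) ^ (-(5:ℝ)/4) := by
        rw [← Real.rpow_natCast (x + y - 1) 2, ← Real.rpow_mul ht.le]
        norm_num
      rw [e1, ← Real.mul_rpow (by linarith) (by linarith)]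
      exact Real.rpow_le_rpow_of_nonpos (by nlinarith) hxy (by norm_num)
    calc ((kL : ℝ) + (kR : ℝ)) ^ ((3 : ℝ) / 2) * (kL : ℝ) ^ (-(5 : ℝ) / 2) *
          (kR : ℝ) ^ (-(5 : ℝ) / 2) *
          ((mL : ℝ) + (mR : ℝ) - (kL : ℝ) - (kR : ℝ) + 1) ^ (-(5 : ℝ) / 2)
        ≤ ((mL : ℝ) + (mR : ℝ)) ^ ((3 : ℝ) / 2) * ((2:ℝ) ^ ((5:ℝ)/2) * (mL : ℝ) ^ (-(5 : ℝ) / 2)) *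
          ((2:ℝ) ^ ((5:ℝ)/2) * (mR : ℝ) ^ (-(5 : ℝ) / 2)) *
          (x ^ (-(5:ℝ)/4) * y ^ (-(5:ℝ)/4)) := by
          have nn1 : (0:ℝ) ≤ (kL : ℝ) ^ (-(5 : ℝ) / 2) := Real.rpow_nonneg (by positivity) _
          have nn2 : (0:ℝ) ≤ (kR : ℝ) ^ (-(5 : ℝ) / 2) := Real.rpow_nonneg (by positivity) _
          have nn4 : (0:ℝ) ≤ ((mL : ℝ) + (mR : ℝ) - (kL : ℝ) - (kR : ℝ) + 1) ^ (-(5 : ℝ) / 2) := by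
            rw [hcast]; exact Real.rpow_nonneg (by linarith) _
          exact mul_le_mul (mul_le_mul (mul_le_mul b1 b2 nn1
            (Real.rpow_nonneg (by positivity) _)) b3 nn2 (by positivity)) b4 nn4 (by positivity)
      _ = K * (x ^ (-(5:ℝ)/4) * y ^ (-(5:ℝ)/4)) := by rw [hK, hB]; ring
  -- now sum
  have step1 : ∑ kL ∈ Finset.Icc ((mL + 1) / 2) mL, ∑ kR ∈ Finset.Icc ((mR + 1) / 2) mR,
        ((kL : ℝ) + (kR : ℝ)) ^ ((3 : ℝ) / 2) * (kL : ℝ) ^ (-(5 : ℝ) / 2) *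
          (kR : ℝ) ^ (-(5 : ℝ) / 2) *
          ((mL : ℝ) + (mR : ℝ) - (kL : ℝ) - (kR : ℝ) + 1) ^ (-(5 : ℝ) / 2)
      ≤ ∑ kL ∈ Finset.Icc ((mL + 1) / 2) mL, ∑ kR ∈ Finset.Icc ((mR + 1) / 2) mR,
        K * ((((mL - kL : ℕ):ℝ) + 1) ^ (-(5:ℝ)/4) * (((mR - kR : ℕ):ℝ) + 1) ^ (-(5:ℝ)/4)) := by
    apply Finset.sum_le_sum
    intro kL hkL
    apply Finset.sum_le_sum
    intro kR hkR
    exact key kL hkL kR hkR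
  have step2 : ∑ kL ∈ Finset.Icc ((mL + 1) / 2) mL, ∑ kR ∈ Finset.Icc ((mR + 1) / 2) mR,
        K * ((((mL - kL : ℕ):ℝ) + 1) ^ (-(5:ℝ)/4) * (((mR - kR : ℕ):ℝ) + 1) ^ (-(5:ℝ)/4))
      = K * ((∑ kL ∈ Finset.Icc ((mL + 1) / 2) mL, (((mL - kL : ℕ):ℝ) + 1) ^ (-(5:ℝ)/4)) *
             (∑ kR ∈ Finset.Icc ((mR + 1) / 2) mR, (((mR - kR : ℕ):ℝ) + 1) ^ (-(5:ℝ)/4))) := by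
    rw [Finset.sum_mul_sum, Finset.mul_sum]
    exact Finset.sum_congr rfl fun kL _ => by rw [Finset.mul_sum]
  have hsL := ov_sum_le mL
  have hsR := ov_sum_le mR
  have hsLnn : 0 ≤ ∑ kL ∈ Finset.Icc ((mL + 1) / 2) mL, (((mL - kL : ℕ):ℝ) + 1) ^ (-(5:ℝ)/4) :=
    Finset.sum_nonneg fun k _ => Real.rpow_nonneg (by positivity) _
  have step3 : K * ((∑ kL ∈ Finset.Icc ((mL + 1) / 2) mL, (((mL - kL : ℕ):ℝ) + 1) ^ (-(5:ℝ)/4)) *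
             (∑ kR ∈ Finset.Icc ((mR + 1) / 2) mR, (((mR - kR : ℕ):ℝ) + 1) ^ (-(5:ℝ)/4)))
      ≤ K * ((ovS + 1) * (ovS + 1)) := by
    apply mul_le_mul_of_nonneg_left _ hKnn
    apply mul_le_mul (by linarith) (by linarith) (Finset.sum_nonneg fun k _ => Real.rpow_nonneg (by positivity) _) (by linarith [ovS_nonneg])
  have hKval : K = 32 * B := by
    rw [hK, ← Real.rpow_add (by norm_num : (0:ℝ) < 2)]
    norm_num
  calc _ ≤ _ := step1
    _ = _ := step2
    _ ≤ K * ((ovS + 1) * (ovS + 1)) := step3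
    _ = 32 * (ovS + 1)^2 * ((mL : ℝ) + (mR : ℝ)) ^ ((3 : ℝ) / 2) * (mL : ℝ) ^ (-(5 : ℝ) / 2) *
          (mR : ℝ) ^ (-(5 : ℝ) / 2) := by rw [hKval, hB]; ring
end
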